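/- Let (t, e) be a counital fusion morphism on an object A of a braided monoidal category C, with induced multiplication m := t ≫ (e ⊗ 1_A) ≫ λ_A. Then the 'short fusion equation' holds: (1_A ⊗ t) ≫ (b_{A,A} ⊗ 1_A) ≫ (1_A ⊗ t) ≫ (b_{A,A}⁻¹ ⊗ 1_A) ≫ (m ⊗ 1_A) = (m ⊗ 1_A) ≫ t as morphisms A ⊗ A ⊗ A ⟶ A ⊗ A (suppressing associators). -/

import Mathlib

open CategoryTheory Category MonoidalCategory

universe v u

variable {C : Type u} [Category.{v} C] [MonoidalCategory C] [BraidedCategory C]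

/-- The fusion equation for `t : A ⊗ A ⟶ A ⊗ A` in a braided monoidal category,
with all coherence isomorphisms made explicit (domain `A ⊗ (A ⊗ A)`). -/
def FusionEq (A : C) (t : A ⊗ A ⟶ A ⊗ A) : Prop :=
  (A ◁ t) ≫ (α_ A A A).inv ≫ ((β_ A A).hom ▷ A) ≫ (α_ A A A).hom ≫ (A ◁ t) ≫
      (α_ A A A).inv ≫ ((β_ A A).inv ▷ A) ≫ (t ▷ A) ≫ (α_ A A A).hom =
    (α_ A A A).inv ≫ (t ▷ A) ≫ (α_ A A A).hom ≫ (A ◁ t)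

/-- The counitality condition `t ≫ (1 ⊗ e) = 1 ⊗ e`. -/
def Counital (A : C) (t : A ⊗ A ⟶ A ⊗ A) (e : A ⟶ 𝟙_ C) : Prop :=
  t ≫ (A ◁ e) = A ◁ e

/-- The multiplication induced by a counital fusion morphism:
`m := t ≫ (e ⊗ 1) ≫ λ_A`. -/
def mulOf (A : C) (t : A ⊗ A ⟶ A ⊗ A) (e : A ⟶ 𝟙_ C) : A ⊗ A ⟶ A :=
  t ≫ (e ▷ A) ≫ (λ_ A).hom


/-- For a counital fusion morphism `(t, e)` on `A` with induced multiplication `m`,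
the short fusion equation
`(1 ⊗ t) ≫ (b ⊗ 1) ≫ (1 ⊗ t) ≫ (b⁻¹ ⊗ 1) ≫ (m ⊗ 1) = (m ⊗ 1) ≫ t` holds. -/
theorem shortFusion (A : C) (t : A ⊗ A ⟶ A ⊗ A) (e : A ⟶ 𝟙_ C)
    (hfus : FusionEq A t) (hcou : Counital A t e) :
    (A ◁ t) ≫ (α_ A A A).inv ≫ ((β_ A A).hom ▷ A) ≫ (α_ A A A).hom ≫ (A ◁ t) ≫
        (α_ A A A).inv ≫ ((β_ A A).inv ▷ A) ≫ (mulOf A t e ▷ A) =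
      (α_ A A A).inv ≫ (mulOf A t e ▷ A) ≫ t := by
  unfold FusionEq at hfus
  unfold mulOf
  simp only [comp_whiskerRight]
  have key : (α_ A A A).inv ≫ ((e ▷ A) ▷ A) ≫ ((λ_ A).hom ▷ A)
      = (e ▷ (A ⊗ A)) ≫ (λ_ (A ⊗ A)).hom := by
    rw [leftUnitor_tensor_hom]
    simp [associator_inv_naturality_left_assoc]
  have key2 : (A ◁ t) ≫ (α_ A A A).inv ≫ ((e ▷ A) ▷ A) ≫ ((λ_ A).hom ▷ A)
      = ((α_ A A A).inv ≫ ((e ▷ A) ▷ A) ≫ ((λ_ A).hom ▷ A)) ≫ t := by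
    rw [key]
    rw [whisker_exchange_assoc]
    simp [leftUnitor_naturality]
  have hfus' : (A ◁ t) ≫ (α_ A A A).inv ≫ ((β_ A A).hom ▷ A) ≫ (α_ A A A).hom ≫ (A ◁ t) ≫
      (α_ A A A).inv ≫ ((β_ A A).inv ▷ A) ≫ (t ▷ A) =
    (α_ A A A).inv ≫ (t ▷ A) ≫ (α_ A A A).hom ≫ (A ◁ t) ≫ (α_ A A A).inv := by
    rw [← cancel_mono (α_ A A A).hom]
    simpa using hfus
  calc (A ◁ t) ≫ (α_ A A A).inv ≫ ((β_ A A).hom ▷ A) ≫ (α_ A A A).hom ≫ (A ◁ t) ≫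
        (α_ A A A).inv ≫ ((β_ A A).inv ▷ A) ≫ (t ▷ A) ≫ ((e ▷ A) ▷ A) ≫ ((λ_ A).hom ▷ A)
      = ((A ◁ t) ≫ (α_ A A A).inv ≫ ((β_ A A).hom ▷ A) ≫ (α_ A A A).hom ≫ (A ◁ t) ≫
        (α_ A A A).inv ≫ ((β_ A A).inv ▷ A) ≫ (t ▷ A)) ≫ ((e ▷ A) ▷ A) ≫ ((λ_ A).hom ▷ A) := by
        simp only [Category.assoc]
    _ = ((α_ A A A).inv ≫ (t ▷ A) ≫ (α_ A A A).hom ≫ (A ◁ t) ≫ (α_ A A A).inv) ≫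
        ((e ▷ A) ▷ A) ≫ ((λ_ A).hom ▷ A) := by rw [hfus']
    _ = (α_ A A A).inv ≫ (t ▷ A) ≫ (α_ A A A).hom ≫ (A ◁ t) ≫ (α_ A A A).inv ≫
        ((e ▷ A) ▷ A) ≫ ((λ_ A).hom ▷ A) := by simp only [Category.assoc]
    _ = (α_ A A A).inv ≫ (t ▷ A) ≫ (α_ A A A).hom ≫ ((α_ A A A).inv ≫
        ((e ▷ A) ▷ A) ≫ ((λ_ A).hom ▷ A)) ≫ t := by rw [key2]
    _ = (α_ A A A).inv ≫ (t ▷ A) ≫ ((e ▷ A) ▷ A) ≫ ((λ_ A).hom ▷ A) ≫ t := by simp only [Iso.hom_inv_id_assoc, Category.assoc]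

    _ = (α_ A A A).inv ≫ ((t ▷ A) ≫ ((e ▷ A) ▷ A) ≫ ((λ_ A).hom ▷ A)) ≫ t := by
        simp only [Category.assoc]
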